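/- (Theorem 1, primal part.) For every θ ∈ ℝⁿ, the primal parametric solution for the enlarged active set A_j = A_i ∪ {j} satisfies the rank-one update identity z_{A_j}(θ) = z_{A_i}(θ) + f_j (c_j + v_jᵀ θ), where f_j = H⁻¹ G_{A_j}ᵀ (d̃_j restricted to A_j) ∈ ℝ^m. -/

import Mathlib

open Matrix

noncomputable section
namespace MpQP

/-- Submatrix of the rows of `G` indexed by the finite index set `A`. -/
def subRows {nc p : ℕ} (G : Matrix (Fin nc) (Fin p) ℝ) (A : Finset (Fin nc)) :
    Matrix A (Fin p) ℝ := Matrix.of fun i k => G i.val k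

/-- Subvector of `b` indexed by `A`. -/
def subVec {nc : ℕ} (b : Fin nc → ℝ) (A : Finset (Fin nc)) : A → ℝ := fun i => b i.val

/-- `G_A` has full row rank, i.e. the rows of `G` indexed by `A` are linearly independent. -/
def FullRowRank {nc m : ℕ} (G : Matrix (Fin nc) (Fin m) ℝ) (A : Finset (Fin nc)) : Prop :=
  LinearIndependent ℝ (fun i : A => G i.val)

/-- The parametric dual solution `λ_A(θ) = −(G_A H⁻¹ G_Aᵀ)⁻¹ (b_A + S_A θ)`. -/
def lamOf {m n nc : ℕ} (H : Matrix (Fin m) (Fin m) ℝ) (G : Matrix (Fin nc) (Fin m) ℝ)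
    (b : Fin nc → ℝ) (S : Matrix (Fin nc) (Fin n) ℝ) (A : Finset (Fin nc))
    (θ : Fin n → ℝ) : A → ℝ :=
  -((subRows G A * H⁻¹ * (subRows G A)ᵀ)⁻¹.mulVec
      (fun i => b i.val + S.mulVec θ i.val))

/-- The parametric primal solution `z_A(θ) = −H⁻¹ G_Aᵀ λ_A(θ)`. -/
def zOf {m n nc : ℕ} (H : Matrix (Fin m) (Fin m) ℝ) (G : Matrix (Fin nc) (Fin m) ℝ)
    (b : Fin nc → ℝ) (S : Matrix (Fin nc) (Fin n) ℝ) (A : Finset (Fin nc))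
    (θ : Fin n → ℝ) : Fin m → ℝ :=
  -((H⁻¹ * (subRows G A)ᵀ).mulVec (lamOf H G b S A θ))

/-- `λ̃_A(θ) ∈ ℝ^{n_c}`: the dual solution extended by zeros outside `A`. -/
def lamExt {m n nc : ℕ} (H : Matrix (Fin m) (Fin m) ℝ) (G : Matrix (Fin nc) (Fin m) ℝ)
    (b : Fin nc → ℝ) (S : Matrix (Fin nc) (Fin n) ℝ) (A : Finset (Fin nc))
    (θ : Fin n → ℝ) : Fin nc → ℝ :=
  fun k => if h : k ∈ A then lamOf H G b S A θ ⟨k, h⟩ else 0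

/-- `W = G_A H⁻¹ G_Aᵀ`. -/
def Wmat {m nc : ℕ} (H : Matrix (Fin m) (Fin m) ℝ) (G : Matrix (Fin nc) (Fin m) ℝ)
    (A : Finset (Fin nc)) : Matrix A A ℝ :=
  subRows G A * H⁻¹ * (subRows G A)ᵀ

/-- `w = G_A H⁻¹ G_jᵀ`. -/
def wvec {m nc : ℕ} (H : Matrix (Fin m) (Fin m) ℝ) (G : Matrix (Fin nc) (Fin m) ℝ)
    (A : Finset (Fin nc)) (j : Fin nc) : A → ℝ :=
  (subRows G A * H⁻¹).mulVec (G j)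

/-- `w₀ = G_j H⁻¹ G_jᵀ`. -/
def w0 {m nc : ℕ} (H : Matrix (Fin m) (Fin m) ℝ) (G : Matrix (Fin nc) (Fin m) ℝ)
    (j : Fin nc) : ℝ :=
  G j ⬝ᵥ H⁻¹.mulVec (G j)

/-- The Schur complement `C = w₀ − wᵀ W⁻¹ w`. -/
def Cval {m nc : ℕ} (H : Matrix (Fin m) (Fin m) ℝ) (G : Matrix (Fin nc) (Fin m) ℝ)
    (A : Finset (Fin nc)) (j : Fin nc) : ℝ :=
  w0 H G j - wvec H G A j ⬝ᵥ (Wmat H G A)⁻¹.mulVec (wvec H G A j)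

/-- `c_j = C⁻¹ (wᵀ W⁻¹ b_A − b_j)`. -/
def cVal {m nc : ℕ} (H : Matrix (Fin m) (Fin m) ℝ) (G : Matrix (Fin nc) (Fin m) ℝ)
    (b : Fin nc → ℝ) (A : Finset (Fin nc)) (j : Fin nc) : ℝ :=
  (Cval H G A j)⁻¹ * (wvec H G A j ⬝ᵥ (Wmat H G A)⁻¹.mulVec (subVec b A) - b j)

/-- `v_j = C⁻¹ (S_Aᵀ W⁻¹ w − S_jᵀ)`. -/
def vVec {m n nc : ℕ} (H : Matrix (Fin m) (Fin m) ℝ) (G : Matrix (Fin nc) (Fin m) ℝ)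
    (S : Matrix (Fin nc) (Fin n) ℝ) (A : Finset (Fin nc)) (j : Fin nc) : Fin n → ℝ :=
  (Cval H G A j)⁻¹ •
    ((subRows S A)ᵀ.mulVec ((Wmat H G A)⁻¹.mulVec (wvec H G A j)) - S j)

/-- `d̃_j ∈ ℝ^{n_c}`: equal to `W⁻¹ w` on `A`, to `−1` at index `j`, and `0` elsewhere. -/
def dExt {m nc : ℕ} (H : Matrix (Fin m) (Fin m) ℝ) (G : Matrix (Fin nc) (Fin m) ℝ)
    (A : Finset (Fin nc)) (j : Fin nc) : Fin nc → ℝ :=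
  fun k =>
    if h : k ∈ A then (Wmat H G A)⁻¹.mulVec (wvec H G A j) ⟨k, h⟩
    else if k = j then -1 else 0

/-- `f_j = H⁻¹ G_{A ∪ {j}}ᵀ (d̃_j restricted to A ∪ {j})`. -/
def fVec {m nc : ℕ} (H : Matrix (Fin m) (Fin m) ℝ) (G : Matrix (Fin nc) (Fin m) ℝ)
    (A : Finset (Fin nc)) (j : Fin nc) : Fin m → ℝ :=
  (H⁻¹ * (subRows G (insert j A))ᵀ).mulVec (fun i => dExt H G A j i.val)


/-! ### Auxiliary lemmas -/

lemma sum_insert_coe {nc : ℕ} {j : Fin nc} {A : Finset (Fin nc)} (hj : j ∉ A) (f : Fin nc → ℝ) :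
    ∑ i : ↥(insert j A), f i.val = f j + ∑ i : ↥A, f i.val := by
  rw [Finset.sum_coe_sort, Finset.sum_coe_sort, Finset.sum_insert hj]

lemma dot_mulVec_symm {ι : Type*} [Fintype ι] {M : Matrix ι ι ℝ} (hM : Mᵀ = M)
    (a b : ι → ℝ) : a ⬝ᵥ M *ᵥ b = b ⬝ᵥ M *ᵥ a := by
  rw [Matrix.dotProduct_mulVec, ← Matrix.mulVec_transpose, hM, dotProduct_comm]

lemma Wmat_apply {m nc : ℕ} (H : Matrix (Fin m) (Fin m) ℝ) (G : Matrix (Fin nc) (Fin m) ℝ)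
    (A : Finset (Fin nc)) (i k : A) :
    Wmat H G A i k = G i.val ⬝ᵥ H⁻¹ *ᵥ G k.val := by
  simp only [Wmat, subRows, Matrix.mul_apply, Matrix.transpose_apply, Matrix.of_apply,
    Matrix.mulVec, dotProduct, Finset.sum_mul, Finset.mul_sum, mul_assoc]
  exact Finset.sum_comm

lemma wvec_apply {m nc : ℕ} (H : Matrix (Fin m) (Fin m) ℝ) (G : Matrix (Fin nc) (Fin m) ℝ)
    (A : Finset (Fin nc)) (j : Fin nc) (i : A) :
    wvec H G A j i = G i.val ⬝ᵥ H⁻¹ *ᵥ G j := by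
  simp only [wvec, subRows, Matrix.mul_apply, Matrix.of_apply,
    Matrix.mulVec, dotProduct, Finset.sum_mul, Finset.mul_sum, mul_assoc]
  exact Finset.sum_comm

lemma transpose_eq_of_posDef {m : ℕ} {H : Matrix (Fin m) (Fin m) ℝ} (hH : H.PosDef) :
    Hᵀ = H := by
  simpa using hH.isHermitian.eq

lemma inv_transpose_eq_of_posDef {m : ℕ} {H : Matrix (Fin m) (Fin m) ℝ} (hH : H.PosDef) :
    (H⁻¹)ᵀ = H⁻¹ := by
  rw [Matrix.transpose_nonsing_inv, transpose_eq_of_posDef hH]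

lemma Wmat_transpose {m nc : ℕ} {H : Matrix (Fin m) (Fin m) ℝ} (hH : H.PosDef)
    (G : Matrix (Fin nc) (Fin m) ℝ) (A : Finset (Fin nc)) :
    (Wmat H G A)ᵀ = Wmat H G A := by
  simp [Wmat, Matrix.transpose_mul, Matrix.mul_assoc, inv_transpose_eq_of_posDef hH]

lemma Wmat_inv_transpose {m nc : ℕ} {H : Matrix (Fin m) (Fin m) ℝ} (hH : H.PosDef)
    (G : Matrix (Fin nc) (Fin m) ℝ) (A : Finset (Fin nc)) :
    ((Wmat H G A)⁻¹)ᵀ = (Wmat H G A)⁻¹ := by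
  rw [Matrix.transpose_nonsing_inv, Wmat_transpose hH]

lemma Wmat_posDef {m nc : ℕ} {H : Matrix (Fin m) (Fin m) ℝ} (hH : H.PosDef)
    {G : Matrix (Fin nc) (Fin m) ℝ} {A : Finset (Fin nc)} (hA : FullRowRank G A) :
    (Wmat H G A).PosDef := by
  rw [Matrix.posDef_iff_dotProduct_mulVec]
  constructor
  · rw [Matrix.IsHermitian, Matrix.conjTranspose_eq_transpose_of_trivial, Wmat_transpose hH]
  · intro x hx
    have hy : (subRows G A)ᵀ *ᵥ x ≠ 0 := by
      intro h0
      apply hx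
      funext i
      refine Fintype.linearIndependent_iff.mp hA x ?_ i
      funext l
      have := congrFun h0 l
      simpa [Matrix.mulVec, dotProduct, subRows, mul_comm] using this
    have key : star x ⬝ᵥ (Wmat H G A) *ᵥ x
        = star ((subRows G A)ᵀ *ᵥ x) ⬝ᵥ H⁻¹ *ᵥ ((subRows G A)ᵀ *ᵥ x) := by
      simp only [star_trivial, Wmat]
      rw [← Matrix.mulVec_mulVec, ← Matrix.mulVec_mulVec, Matrix.dotProduct_mulVec,
        ← Matrix.mulVec_transpose]
    rw [key]
    exact hH.inv.dotProduct_mulVec_pos hy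

lemma mulVec_inv_cancel {ι : Type*} [Fintype ι] [DecidableEq ι] {M : Matrix ι ι ℝ}
    (h : IsUnit M.det) (x : ι → ℝ) : M *ᵥ (M⁻¹ *ᵥ x) = x := by
  rw [Matrix.mulVec_mulVec, Matrix.mul_nonsing_inv _ h, Matrix.one_mulVec]

/-- Entry formula for `Wmat (insert j A)` applied to the restriction of a global vector. -/
lemma Wmat_insert_mulVec {m nc : ℕ} (H : Matrix (Fin m) (Fin m) ℝ)
    (G : Matrix (Fin nc) (Fin m) ℝ) {A : Finset (Fin nc)} {j : Fin nc} (hj : j ∉ A)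
    (v : Fin nc → ℝ) (i : ↥(insert j A)) :
    (Wmat H G (insert j A) *ᵥ (fun k => v k.val)) i
      = (G i.val ⬝ᵥ H⁻¹ *ᵥ G j) * v j
        + ∑ k : ↥A, (G i.val ⬝ᵥ H⁻¹ *ᵥ G k.val) * v k.val := by
  have : (Wmat H G (insert j A) *ᵥ (fun k => v k.val)) i
      = ∑ k : ↥(insert j A), (G i.val ⬝ᵥ H⁻¹ *ᵥ G k.val) * v k.val := by
    simp only [Matrix.mulVec, dotProduct, Wmat_apply]
  rw [this]
  exact sum_insert_coe hj (fun k => (G i.val ⬝ᵥ H⁻¹ *ᵥ G k) * v k)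

/-- Entry formula for `(M * (subRows G A)ᵀ) *ᵥ v`. -/
lemma mul_transpose_subRows_mulVec {m nc : ℕ} (M : Matrix (Fin m) (Fin m) ℝ)
    (G : Matrix (Fin nc) (Fin m) ℝ) (A : Finset (Fin nc)) (v : A → ℝ) (r : Fin m) :
    ((M * (subRows G A)ᵀ) *ᵥ v) r = ∑ k : ↥A, (M *ᵥ G k.val) r * v k := by
  simp only [Matrix.mulVec, dotProduct, Matrix.mul_apply, Matrix.transpose_apply,
    subRows, Matrix.of_apply]

/-- Theorem 1, primal part: the primal parametric solution for the enlarged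
active set `A_j = A_i ∪ {j}` is a rank-one update of the one for `A_i`:
`z_{A_j}(θ) = z_{A_i}(θ) + (c_j + v_jᵀθ) f_j`. -/
theorem primal_rankOne_update_add
    {m n nc : ℕ} (H : Matrix (Fin m) (Fin m) ℝ) (hH : H.PosDef)
    (G : Matrix (Fin nc) (Fin m) ℝ) (b : Fin nc → ℝ) (S : Matrix (Fin nc) (Fin n) ℝ)
    (Ai : Finset (Fin nc)) (j : Fin nc) (hj : j ∉ Ai)
    (hAi : FullRowRank G Ai) (hAj : FullRowRank G (insert j Ai)) :
    ∀ θ : Fin n → ℝ,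
      zOf H G b S (insert j Ai) θ =
        zOf H G b S Ai θ +
          (cVal H G b Ai j + vVec H G S Ai j ⬝ᵥ θ) • fVec H G Ai j := by
  intro θ
  classical
  have hsymH : (H⁻¹)ᵀ = H⁻¹ := inv_transpose_eq_of_posDef hH
  have hgsym : ∀ a c : Fin nc, G a ⬝ᵥ H⁻¹ *ᵥ G c = G c ⬝ᵥ H⁻¹ *ᵥ G a := fun a c =>
    dot_mulVec_symm hsymH _ _
  have hWpd := Wmat_posDef hH hAi
  have hWdet : IsUnit (Wmat H G Ai).det := hWpd.det_pos.ne'.isUnit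
  have hWjpd := Wmat_posDef hH hAj
  have hWjdet : IsUnit (Wmat H G (insert j Ai)).det := hWjpd.det_pos.ne'.isUnit
  have hWinvsym : ((Wmat H G Ai)⁻¹)ᵀ = (Wmat H G Ai)⁻¹ := Wmat_inv_transpose hH G Ai
  set w : ↥Ai → ℝ := wvec H G Ai j with hwdef
  set p : ↥Ai → ℝ := (Wmat H G Ai)⁻¹ *ᵥ w with hpdef
  set lam : ↥Ai → ℝ := lamOf H G b S Ai θ with hlamdef
  set q : ↥Ai → ℝ := fun i => b i.val + S.mulVec θ i.val with hqdef
  have hWp : Wmat H G Ai *ᵥ p = w := mulVec_inv_cancel hWdet w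
  have hWlam : Wmat H G Ai *ᵥ lam = -q := by
    show Wmat H G Ai *ᵥ (-((Wmat H G Ai)⁻¹ *ᵥ q)) = -q
    rw [Matrix.mulVec_neg, mulVec_inv_cancel hWdet]
  have hC : Cval H G Ai j = w0 H G j - w ⬝ᵥ p := rfl
  -- sums over Ai
  have hsumW : ∀ (v : ↥Ai → ℝ) (i : Fin nc) (h : i ∈ Ai),
      ∑ k : ↥Ai, (G i ⬝ᵥ H⁻¹ *ᵥ G (k : Fin nc)) * v k = (Wmat H G Ai *ᵥ v) ⟨i, h⟩ := by
    intro v i h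
    simp only [Matrix.mulVec, dotProduct, Wmat_apply]
  have hsumw : ∀ v : ↥Ai → ℝ,
      ∑ k : ↥Ai, (G j ⬝ᵥ H⁻¹ *ᵥ G (k : Fin nc)) * v k = w ⬝ᵥ v := by
    intro v
    have e : ∀ k : ↥Ai, G j ⬝ᵥ H⁻¹ *ᵥ G (k : Fin nc) = w k := fun k => by
      rw [hgsym]; exact (wvec_apply H G Ai j k).symm
    show _ = ∑ k : ↥Ai, w k * v k
    exact Finset.sum_congr rfl fun k _ => by rw [e]
  -- the key entry formula
  have hkey : ∀ (vb : Fin nc → ℝ) (i : ↥(insert j Ai)),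
      (Wmat H G (insert j Ai) *ᵥ fun k => vb (k : Fin nc)) i
        = if h : (i : Fin nc) ∈ Ai then
            (G (i : Fin nc) ⬝ᵥ H⁻¹ *ᵥ G j) * vb j
              + (Wmat H G Ai *ᵥ fun k : ↥Ai => vb (k : Fin nc)) ⟨(i : Fin nc), h⟩
          else w0 H G j * vb j + w ⬝ᵥ (fun k : ↥Ai => vb (k : Fin nc)) := by
    intro vb i
    rw [Wmat_insert_mulVec H G hj]
    by_cases h : (i : Fin nc) ∈ Ai
    · rw [dif_pos h, hsumW _ _ h]
    · have hij : (i : Fin nc) = j := by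
        rcases Finset.mem_insert.mp i.2 with h' | h'
        · exact h'
        · exact absurd h' h
      rw [dif_neg h, hij, hsumw]
      rfl
  -- dExt facts
  have hdj : dExt H G Ai j j = -1 := by simp [dExt, hj]
  have hdres : (fun k : ↥Ai => dExt H G Ai j (k : Fin nc)) = p := by
    funext k
    simp only [dExt, k.2, dif_pos]
    rfl
  have hWjd : (Wmat H G (insert j Ai) *ᵥ fun k => dExt H G Ai j (k : Fin nc))
      = fun i : ↥(insert j Ai) =>
          if (i : Fin nc) ∈ Ai then 0 else -Cval H G Ai j := by
    funext i
    rw [hkey]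
    by_cases h : (i : Fin nc) ∈ Ai
    · rw [dif_pos h, if_pos h, hdres, hWp, hdj]
      have hwi : G (i : Fin nc) ⬝ᵥ H⁻¹ *ᵥ G j = w ⟨(i : Fin nc), h⟩ :=
        (wvec_apply H G Ai j ⟨(i : Fin nc), h⟩).symm
      rw [hwi]; ring
    · rw [dif_neg h, if_neg h, hdres, hdj, hC]; ring
  -- positivity of C
  have hCpos : 0 < Cval H G Ai j := by
    have hune : (fun k : ↥(insert j Ai) => dExt H G Ai j (k : Fin nc)) ≠ 0 := by
      intro h0
      have h1 := congrFun h0 ⟨j, Finset.mem_insert_self j Ai⟩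
      rw [hdj] at h1
      norm_num at h1
    have hq2 := hWjpd.dotProduct_mulVec_pos hune
    rw [star_trivial, hWjd] at hq2
    have hdot : (fun k : ↥(insert j Ai) => dExt H G Ai j (k : Fin nc)) ⬝ᵥ
        (fun i : ↥(insert j Ai) => if (i : Fin nc) ∈ Ai then 0 else -Cval H G Ai j)
        = Cval H G Ai j := by
      show (∑ i : ↥(insert j Ai),
        dExt H G Ai j (i : Fin nc) * (if (i : Fin nc) ∈ Ai then 0 else -Cval H G Ai j)) = _
      rw [sum_insert_coe hj
        (fun k => dExt H G Ai j k * (if k ∈ Ai then 0 else -Cval H G Ai j))]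
      simp [hdj, hj]
    rw [hdot] at hq2
    exact hq2
  have hCne : Cval H G Ai j ≠ 0 := hCpos.ne'
  -- the mu vector
  set α : ℝ := cVal H G b Ai j + vVec H G S Ai j ⬝ᵥ θ with hαdef
  set μb : Fin nc → ℝ :=
    fun k => lamExt H G b S Ai θ k - α * dExt H G Ai j k with hμbdef
  have hμj : μb j = α := by
    simp [hμbdef, lamExt, dExt, hj]
  have hμres : (fun k : ↥Ai => μb (k : Fin nc)) = lam - α • p := by
    funext k
    simp only [hμbdef, lamExt, dExt, k.2, dif_pos, Pi.sub_apply, Pi.smul_apply, smul_eq_mul]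
    rfl
  have hWμres : Wmat H G Ai *ᵥ (fun k : ↥Ai => μb (k : Fin nc)) = -q - α • w := by
    rw [hμres, Matrix.mulVec_sub, Matrix.mulVec_smul, hWlam, hWp]
  have hwlam : w ⬝ᵥ lam = -(p ⬝ᵥ q) := by
    show w ⬝ᵥ (-((Wmat H G Ai)⁻¹ *ᵥ q)) = -(p ⬝ᵥ q)
    rw [dotProduct_neg, dot_mulVec_symm hWinvsym, neg_inj, dotProduct_comm]
  have hqsplit : q = subVec b Ai + subRows S Ai *ᵥ θ := by
    funext i
    simp [hqdef, subVec, subRows, Matrix.mulVec, dotProduct]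
  have hpq : p ⬝ᵥ q = p ⬝ᵥ subVec b Ai + p ⬝ᵥ (subRows S Ai *ᵥ θ) := by
    rw [hqsplit, dotProduct_add]
  have hαC : Cval H G Ai j * α
      = (p ⬝ᵥ subVec b Ai - b j) + (p ⬝ᵥ (subRows S Ai *ᵥ θ) - S j ⬝ᵥ θ) := by
    rw [hαdef, mul_add]
    have h1 : Cval H G Ai j * cVal H G b Ai j = p ⬝ᵥ subVec b Ai - b j := by
      rw [cVal, ← mul_assoc, mul_inv_cancel₀ hCne, one_mul,
        dot_mulVec_symm hWinvsym, dotProduct_comm]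
    have h2 : Cval H G Ai j * (vVec H G S Ai j ⬝ᵥ θ)
        = p ⬝ᵥ (subRows S Ai *ᵥ θ) - S j ⬝ᵥ θ := by
      rw [vVec, smul_dotProduct, smul_eq_mul, ← mul_assoc, mul_inv_cancel₀ hCne, one_mul,
        sub_dotProduct, Matrix.mulVec_transpose, ← Matrix.dotProduct_mulVec]
    rw [h1, h2]
  -- main identity: Wj *ᵥ μ = -(b + Sθ) on insert j Ai
  have hWjμ : (Wmat H G (insert j Ai) *ᵥ fun k => μb (k : Fin nc))
      = fun i : ↥(insert j Ai) => -(b (i : Fin nc) + S.mulVec θ (i : Fin nc)) := by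
    funext i
    rw [hkey]
    by_cases h : (i : Fin nc) ∈ Ai
    · rw [dif_pos h, hWμres, hμj]
      have hwi : G (i : Fin nc) ⬝ᵥ H⁻¹ *ᵥ G j = w ⟨(i : Fin nc), h⟩ :=
        (wvec_apply H G Ai j ⟨(i : Fin nc), h⟩).symm
      rw [hwi]
      have hqi : q ⟨(i : Fin nc), h⟩ = b (i : Fin nc) + S.mulVec θ (i : Fin nc) := rfl
      simp only [Pi.sub_apply, Pi.neg_apply, Pi.smul_apply, smul_eq_mul, hqi]
      ring
    · have hij : (i : Fin nc) = j := by
        rcases Finset.mem_insert.mp i.2 with h' | h'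
        · exact h'
        · exact absurd h' h
      rw [dif_neg h, hμj, hμres, dotProduct_sub, dotProduct_smul, smul_eq_mul, hwlam, hij]
      have hαC' : (w0 H G j - w ⬝ᵥ p) * α
          = (p ⬝ᵥ subVec b Ai - b j) + (p ⬝ᵥ (subRows S Ai *ᵥ θ) - S j ⬝ᵥ θ) := by
        rw [← hC]; exact hαC
      have hSj : S.mulVec θ j = S j ⬝ᵥ θ := rfl
      rw [hSj]
      linear_combination hαC' - hpq
  -- λ_{Aj} equals the restriction of μb
  have hlamj : lamOf H G b S (insert j Ai) θ = fun k : ↥(insert j Ai) => μb (k : Fin nc) := by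
    have h1 : (fun i : ↥(insert j Ai) => b (i : Fin nc) + S.mulVec θ (i : Fin nc))
        = -(Wmat H G (insert j Ai) *ᵥ fun k => μb (k : Fin nc)) := by
      rw [hWjμ]; funext i; simp
    show -((Wmat H G (insert j Ai))⁻¹ *ᵥ
        (fun i : ↥(insert j Ai) => b (i : Fin nc) + S.mulVec θ (i : Fin nc))) = _
    rw [h1, Matrix.mulVec_neg, neg_neg, Matrix.mulVec_mulVec,
      Matrix.nonsing_inv_mul _ hWjdet, Matrix.one_mulVec]
  -- transfer through H⁻¹ Gᵀ
  have hlamext : ((H⁻¹ * (subRows G (insert j Ai))ᵀ) *ᵥ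
        fun k : ↥(insert j Ai) => lamExt H G b S Ai θ (k : Fin nc))
      = (H⁻¹ * (subRows G Ai)ᵀ) *ᵥ lam := by
    funext r
    rw [mul_transpose_subRows_mulVec, mul_transpose_subRows_mulVec,
      sum_insert_coe hj (fun k => (H⁻¹ *ᵥ G k) r * lamExt H G b S Ai θ k)]
    simp [lamExt, hj]
    rfl
  have hμext : (fun k : ↥(insert j Ai) => μb (k : Fin nc))
      = (fun k : ↥(insert j Ai) => lamExt H G b S Ai θ (k : Fin nc))
        - α • (fun k : ↥(insert j Ai) => dExt H G Ai j (k : Fin nc)) := by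
    funext k
    simp [hμbdef]
  -- final assembly
  show -((H⁻¹ * (subRows G (insert j Ai))ᵀ) *ᵥ lamOf H G b S (insert j Ai) θ)
      = -((H⁻¹ * (subRows G Ai)ᵀ) *ᵥ lam) + α • fVec H G Ai j
  rw [hlamj, hμext, Matrix.mulVec_sub, Matrix.mulVec_smul, hlamext]
  have hf : (H⁻¹ * (subRows G (insert j Ai))ᵀ) *ᵥ
      (fun k : ↥(insert j Ai) => dExt H G Ai j (k : Fin nc)) = fVec H G Ai j := rfl
  rw [hf, neg_sub, sub_eq_neg_add]


end MpQP
end
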